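/- Let x_1,…,x_n ∈ ℝ^p and t ∈ ℝ^p be such that y_ℓ := x_ℓ − t is nonzero for every ℓ, and suppose the vectors y_1,…,y_n are not all contained in a single one-dimensional linear subspace of ℝ^p. Then the matrix G := Σ_{ℓ=1}^n ‖y_ℓ‖^{-1} (I_p − y_ℓ y_ℓ'/‖y_ℓ‖²) is symmetric positive definite (in particular, invertible). -/

import Mathlib

open Matrix RealInnerProductSpace

lemma my_vecMulVec_mulVec {p : ℕ} (u w : Fin p → ℝ) :
    Matrix.vecMulVec u u *ᵥ w = (u ⬝ᵥ w) • u := by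
  ext i
  simp only [Matrix.mulVec, Matrix.vecMulVec_apply, dotProduct, Pi.smul_apply, smul_eq_mul,
    Finset.sum_mul]
  exact Finset.sum_congr rfl fun j _ => by ring

lemma my_sum_mulVec {p n : ℕ} (M : Fin n → Matrix (Fin p) (Fin p) ℝ) (z : Fin p → ℝ) :
    (∑ ℓ, M ℓ) *ᵥ z = ∑ ℓ, M ℓ *ᵥ z :=
  map_sum (Matrix.mulVec.addMonoidHomLeft z) M Finset.univ

lemma my_dot_sum {p n : ℕ} (z : Fin p → ℝ) (w : Fin n → Fin p → ℝ) :
    z ⬝ᵥ (∑ ℓ, w ℓ) = ∑ ℓ, z ⬝ᵥ w ℓ := by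
  simp only [dotProduct, Finset.sum_apply, Finset.mul_sum]
  rw [Finset.sum_comm]

lemma my_quad {p : ℕ} (a b : ℝ) (u z : Fin p → ℝ) :
    z ⬝ᵥ ((a • ((1 : Matrix (Fin p) (Fin p) ℝ) - b • Matrix.vecMulVec u u)) *ᵥ z)
      = a * (z ⬝ᵥ z - b * (u ⬝ᵥ z) ^ 2) := by
  rw [Matrix.smul_mulVec, Matrix.sub_mulVec, Matrix.smul_mulVec,
    Matrix.one_mulVec, my_vecMulVec_mulVec]
  simp only [dotProduct_smul, dotProduct_sub, smul_eq_mul]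
  have h : z ⬝ᵥ u = u ⬝ᵥ z := dotProduct_comm _ _
  rw [h]
  ring

/-- Let `y 0, …, y (n-1)` be nonzero vectors in `ℝ^p` (written
`y ℓ = x ℓ − t`) that are not all contained in a single one-dimensional linear subspace.
Then `G := ∑ ℓ ‖y ℓ‖⁻¹ (I_p − y ℓ (y ℓ)' / ‖y ℓ‖²)` is symmetric positive definite, and in
particular invertible. -/
theorem stmt_10 (n p : ℕ) (x : Fin n → EuclideanSpace ℝ (Fin p))
    (t : EuclideanSpace ℝ (Fin p))
    (y : Fin n → EuclideanSpace ℝ (Fin p)) (hy : ∀ ℓ, y ℓ = x ℓ - t)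
    (hy0 : ∀ ℓ, y ℓ ≠ 0)
    (hline : ¬ ∃ v : EuclideanSpace ℝ (Fin p), ∀ ℓ, ∃ c : ℝ, y ℓ = c • v)
    (G : Matrix (Fin p) (Fin p) ℝ)
    (hG : G = ∑ ℓ, ‖y ℓ‖⁻¹ •
        ((1 : Matrix (Fin p) (Fin p) ℝ)
          - (‖y ℓ‖ ^ 2)⁻¹ • Matrix.vecMulVec (fun r => y ℓ r) (fun r => y ℓ r))) :
    G.PosDef ∧ IsUnit G.det := by
  have hpd : G.PosDef := by
    refine Matrix.posDef_iff_dotProduct_mulVec.mpr ⟨?_, ?_⟩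
    · -- Hermitian
      subst hG
      ext i j
      simp only [Matrix.conjTranspose_apply, Matrix.sum_apply, Matrix.smul_apply,
        Matrix.sub_apply, Matrix.one_apply, Matrix.smul_apply, Matrix.vecMulVec_apply,
        smul_eq_mul, star_trivial]
      refine Finset.sum_congr rfl fun ℓ _ => ?_
      rw [show ((if j = i then (1:ℝ) else 0)) = (if i = j then (1:ℝ) else 0) by
        simp [eq_comm]]
      ring
    · intro z hz
      set w : EuclideanSpace ℝ (Fin p) := (WithLp.equiv 2 (Fin p → ℝ)).symm z with hwdef
      have hw0 : w ≠ 0 := fun h => hz (funext fun r => show w r = (0 : Fin p → ℝ) r from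
        (congrArg (fun v : EuclideanSpace ℝ (Fin p) => v r) h).trans (by simp))
      have hzn : ‖w‖ ≠ 0 := norm_ne_zero_iff.mpr hw0
      have hwz : ∀ r, w r = z r := fun r => rfl
      have hdot : ∀ ℓ : Fin n, (fun r => y ℓ r) ⬝ᵥ z = ⟪y ℓ, w⟫ := by
        intro ℓ
        simp [dotProduct, PiLp.inner_apply, RCLike.inner_apply, hwz, mul_comm]
      have hzz : z ⬝ᵥ z = ‖w‖ ^ 2 := by
        rw [← real_inner_self_eq_norm_sq w]
        rw [PiLp.inner_apply]
        exact Finset.sum_congr rfl fun i _ => by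
          rw [hwz, real_inner_self_eq_norm_sq, Real.norm_eq_abs, sq_abs, sq]
      rw [hG, my_sum_mulVec, star_trivial, my_dot_sum]
      have hterm : ∀ ℓ : Fin n,
          z ⬝ᵥ ((‖y ℓ‖⁻¹ • ((1 : Matrix (Fin p) (Fin p) ℝ)
            - (‖y ℓ‖ ^ 2)⁻¹ • Matrix.vecMulVec (fun r => y ℓ r) (fun r => y ℓ r))) *ᵥ z)
          = ‖y ℓ‖⁻¹ * (‖w‖ ^ 2 - (‖y ℓ‖ ^ 2)⁻¹ * ⟪y ℓ, w⟫ ^ 2) := by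
        intro ℓ
        rw [my_quad, hzz, hdot]
      have hnonneg : ∀ ℓ : Fin n,
          0 ≤ ‖y ℓ‖⁻¹ * (‖w‖ ^ 2 - (‖y ℓ‖ ^ 2)⁻¹ * ⟪y ℓ, w⟫ ^ 2) := by
        intro ℓ
        have hyn : (0:ℝ) < ‖y ℓ‖ := norm_pos_iff.mpr (hy0 ℓ)
        have hcs : ⟪y ℓ, w⟫ ^ 2 ≤ ‖y ℓ‖ ^ 2 * ‖w‖ ^ 2 := by
          have h := real_inner_mul_inner_self_le (y ℓ) w
          rw [real_inner_self_eq_norm_sq, real_inner_self_eq_norm_sq] at h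
          rw [pow_two]; exact h
        have h2 : (‖y ℓ‖ ^ 2)⁻¹ * ⟪y ℓ, w⟫ ^ 2 ≤ ‖w‖ ^ 2 := by
          rw [inv_mul_le_iff₀ (by positivity)]
          nlinarith [hcs]
        exact mul_nonneg (by positivity) (by linarith)
      have hexists : ∃ ℓ : Fin n,
          ‖y ℓ‖⁻¹ * (‖w‖ ^ 2 - (‖y ℓ‖ ^ 2)⁻¹ * ⟪y ℓ, w⟫ ^ 2) ≠ 0 := by
        by_contra hall
        push_neg at hall
        apply hline
        refine ⟨w, fun ℓ => ?_⟩
        have hyn : (0:ℝ) < ‖y ℓ‖ := norm_pos_iff.mpr (hy0 ℓ)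
        have h0 := hall ℓ
        have h1 : ‖w‖ ^ 2 - (‖y ℓ‖ ^ 2)⁻¹ * ⟪y ℓ, w⟫ ^ 2 = 0 := by
          rcases mul_eq_zero.mp h0 with h | h
          · exact absurd h (by positivity)
          · exact h
        have heq : ⟪y ℓ, w⟫ ^ 2 = ‖y ℓ‖ ^ 2 * ‖w‖ ^ 2 := by
          have hy2 : (‖y ℓ‖:ℝ) ^ 2 ≠ 0 := by positivity
          have h4 : (‖y ℓ‖ ^ 2)⁻¹ * ⟪y ℓ, w⟫ ^ 2 = ‖w‖ ^ 2 := by linarith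
          calc ⟪y ℓ, w⟫ ^ 2 = ‖y ℓ‖ ^ 2 * ((‖y ℓ‖ ^ 2)⁻¹ * ⟪y ℓ, w⟫ ^ 2) := by
                rw [← mul_assoc, mul_inv_cancel₀ hy2, one_mul]
            _ = ‖y ℓ‖ ^ 2 * ‖w‖ ^ 2 := by rw [h4]
        have habs : |⟪y ℓ, w⟫| = ‖y ℓ‖ * ‖w‖ := by
          rw [← Real.sqrt_sq_eq_abs, heq,
            show ‖y ℓ‖ ^ 2 * ‖w‖ ^ 2 = (‖y ℓ‖ * ‖w‖) ^ 2 by ring]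
          exact Real.sqrt_sq (by positivity)
        rcases (abs_eq (by positivity)).mp habs with h1 | h1
        · have hsm := inner_eq_norm_mul_iff_real.mp h1
          have h3 := congrArg (fun v : EuclideanSpace ℝ (Fin p) => ‖w‖⁻¹ • v) hsm
          simp only [smul_smul, inv_mul_cancel₀ hzn, one_smul] at h3
          exact ⟨‖w‖⁻¹ * ‖y ℓ‖, h3⟩
        · have h1' : ⟪y ℓ, -w⟫ = ‖y ℓ‖ * ‖-w‖ := by
            rw [inner_neg_right, norm_neg, h1]; ring
          have hsm := inner_eq_norm_mul_iff_real.mp h1'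
          rw [norm_neg] at hsm
          have h3 := congrArg (fun v : EuclideanSpace ℝ (Fin p) => ‖w‖⁻¹ • v) hsm
          simp only [smul_smul, inv_mul_cancel₀ hzn, one_smul] at h3
          refine ⟨-(‖w‖⁻¹ * ‖y ℓ‖), ?_⟩
          conv_lhs => rw [h3]
          rw [smul_neg, neg_smul]
      obtain ⟨ℓ₀, hℓ₀⟩ := hexists
      have hpos : 0 < ‖y ℓ₀‖⁻¹ * (‖w‖ ^ 2 - (‖y ℓ₀‖ ^ 2)⁻¹ * ⟪y ℓ₀, w⟫ ^ 2) :=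
        lt_of_le_of_ne (hnonneg ℓ₀) (Ne.symm hℓ₀)
      calc (0:ℝ) < ‖y ℓ₀‖⁻¹ * (‖w‖ ^ 2 - (‖y ℓ₀‖ ^ 2)⁻¹ * ⟪y ℓ₀, w⟫ ^ 2) := hpos
        _ ≤ ∑ ℓ, ‖y ℓ‖⁻¹ * (‖w‖ ^ 2 - (‖y ℓ‖ ^ 2)⁻¹ * ⟪y ℓ, w⟫ ^ 2) :=
          Finset.single_le_sum (fun ℓ _ => hnonneg ℓ) (Finset.mem_univ ℓ₀)
        _ = _ := Finset.sum_congr rfl fun ℓ _ => (hterm ℓ).symm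
  exact ⟨hpd, isUnit_iff_ne_zero.mpr hpd.det_pos.ne'⟩
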